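/- Let α_ℓ = α for all ℓ and suppose C_{1,α},…,C_{L,α} are i.i.d. random sets each satisfying P(Y ∉ C_{ℓ,α}) ≤ α. Fix y with P(y ∉ C_{1,α}) > α·(τ/α')^{1/k} for fixed k ∈ ℕ, τ ∈ (0,1], α' ∈ (0,1). Define e_ℓ(y) = α⁻¹·1{y ∉ C_{ℓ,α}} and ē_k(y) = (L choose k)⁻¹·∑_{|I|=k} ∏_{ℓ∈I} e_ℓ(y). Then P(ē_k(y) ≥ τ/α') = 1 − O(exp(−C·L)) as L → ∞ for some constant C > 0. -/

import Mathlib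

open MeasureTheory ProbabilityTheory Set
open scoped Classical

lemma aux_sum_prod_ind (T s : Finset ℕ) (hT : T ⊆ s) (k : ℕ) :
    ∑ I ∈ Finset.powersetCard k s, ∏ ℓ ∈ I, (if ℓ ∈ T then (1:ℝ) else 0)
      = (T.card.choose k : ℝ) := by
  have h1 : ∀ I : Finset ℕ, (∏ ℓ ∈ I, (if ℓ ∈ T then (1:ℝ) else 0))
      = if I ⊆ T then (1:ℝ) else 0 := by
    intro I
    by_cases h : I ⊆ T
    · rw [if_pos h]
      exact Finset.prod_eq_one fun ℓ hℓ => if_pos (h hℓ)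
    · rw [if_neg h]
      obtain ⟨ℓ, hℓI, hℓT⟩ := Finset.not_subset.mp h
      exact Finset.prod_eq_zero hℓI (if_neg hℓT)
  rw [Finset.sum_congr rfl fun I _ => h1 I, Finset.sum_boole]
  have h2 : (Finset.powersetCard k s).filter (· ⊆ T) = Finset.powersetCard k T := by
    ext I
    simp only [Finset.mem_filter, Finset.mem_powersetCard]
    exact ⟨fun ⟨⟨_, hc⟩, hI⟩ => ⟨hI, hc⟩, fun ⟨hI, hc⟩ => ⟨⟨hI.trans hT, hc⟩, hI⟩⟩
  rw [h2, Finset.card_powersetCard]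

lemma aux_pow_le_descFactorial (n k : ℕ) : (n + 1 - k) ^ k ≤ n.descFactorial k := by
  rw [Nat.descFactorial_eq_prod_range]
  calc (n + 1 - k) ^ k = ∏ _i ∈ Finset.range k, (n + 1 - k) := by
        rw [Finset.prod_const, Finset.card_range]
    _ ≤ ∏ i ∈ Finset.range k, (n - i) := by
        refine Finset.prod_le_prod' fun i hi => ?_
        have : i + 1 ≤ k := Finset.mem_range.mp hi
        omega

lemma aux_exp_indicator {Ω : Type*} [MeasurableSpace Ω] (A : Set Ω) (t : ℝ) :
    (fun ω => Real.exp (t * A.indicator (fun _ => (1:ℝ)) ω))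
      = fun ω => (Real.exp t - 1) * A.indicator (fun _ => (1:ℝ)) ω + 1 := by
  funext ω
  by_cases h : ω ∈ A
  · simp [Set.indicator_of_mem h]
  · simp [Set.indicator_of_notMem h]

lemma aux_mgf_indicator {Ω : Type*} [MeasurableSpace Ω] (μ : Measure Ω)
    [IsProbabilityMeasure μ] (A : Set Ω) (hA : MeasurableSet A) (t : ℝ) :
    mgf (A.indicator fun _ => (1:ℝ)) μ t
      = (μ A).toReal * Real.exp t + (1 - (μ A).toReal) := by
  have hint : Integrable (A.indicator fun _ => (1:ℝ)) μ :=
    (integrable_const (1:ℝ)).indicator hA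
  rw [mgf, aux_exp_indicator]
  rw [integral_add ((hint.const_mul _)) (integrable_const _)]
  rw [integral_const_mul, integral_indicator_const _ hA]
  simp [measure_univ]
  simp only [Measure.real]
  ring

lemma aux_integrable_exp_ind {Ω : Type*} [MeasurableSpace Ω] (μ : Measure Ω)
    [IsProbabilityMeasure μ] (A : Set Ω) (hA : MeasurableSet A) (t : ℝ) :
    Integrable (fun ω => Real.exp (t * A.indicator (fun _ => (1:ℝ)) ω)) μ := by
  rw [aux_exp_indicator]
  exact (((integrable_const (1:ℝ)).indicator hA).const_mul _).add (integrable_const _)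

lemma aux_chernoff {Ω : Type*} [MeasurableSpace Ω] (μ : Measure Ω) [IsProbabilityMeasure μ]
    (A : ℕ → Set Ω) (hmeas : ∀ ℓ, MeasurableSet (A ℓ))
    (hindep : iIndepSet A μ) (p : ℝ) (hp : ∀ ℓ, (μ (A ℓ)).toReal = p)
    (q' : ℝ) (hq0 : 0 < q') (hq1 : q' < p) (hp1 : p ≤ 1) :
    ∃ c > (0:ℝ), ∀ L : ℕ,
      (μ {ω | (∑ ℓ ∈ Finset.range L, (A ℓ).indicator (fun _ => (1:ℝ)) ω) ≤ q' * L}).toReal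
        ≤ Real.exp (-(c * L)) := by
  set s : ℝ := (p - q') / (2 * q') with hs_def
  have hs : 0 < s := div_pos (by linarith) (by linarith)
  set c : ℝ := p * (1 - (1 + s)⁻¹) - s * q' with hc_def
  have h1s : (0:ℝ) < 1 + s := by linarith
  have hsq : s * q' = (p - q') / 2 := by
    rw [hs_def]; field_simp
  have hc : 0 < c := by
    have h2 : p * (1 - (1 + s)⁻¹) = p * s / (1 + s) := by
      field_simp
      ring
    rw [hc_def, h2, sub_pos, lt_div_iff₀ h1s]
    nlinarith [hsq, hs, hq0, hq1]
  refine ⟨c, hc, fun L => ?_⟩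
  set X : ℕ → Ω → ℝ := fun ℓ => (A ℓ).indicator (fun _ => (1:ℝ)) with hX
  have hXmeas : ∀ ℓ, Measurable (X ℓ) := fun ℓ => measurable_const.indicator (hmeas ℓ)
  have hiid : iIndepFun X μ := hindep.iIndepFun_indicator
  have hint : ∀ ℓ, ∀ t : ℝ, Integrable (fun ω => Real.exp (t * X ℓ ω)) μ := fun ℓ t =>
    aux_integrable_exp_ind μ (A ℓ) (hmeas ℓ) t
  have hintS : Integrable (fun ω => Real.exp ((-s) * (∑ ℓ ∈ Finset.range L, X ℓ) ω)) μ :=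
    hiid.integrable_exp_mul_sum hXmeas (fun ℓ _ => hint ℓ (-s))
  have hcher := measure_le_le_exp_mul_mgf (μ := μ) (X := ∑ ℓ ∈ Finset.range L, X ℓ)
    (q' * L) (neg_nonpos.mpr hs.le) hintS
  have hmgf : mgf (∑ ℓ ∈ Finset.range L, X ℓ) μ (-s)
      = (p * Real.exp (-s) + (1 - p)) ^ L := by
    rw [hiid.mgf_sum hXmeas]
    have : ∀ ℓ, mgf (X ℓ) μ (-s) = p * Real.exp (-s) + (1 - p) := by
      intro ℓ
      rw [hX]
      rw [aux_mgf_indicator μ (A ℓ) (hmeas ℓ) (-s), hp ℓ]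
    rw [Finset.prod_congr rfl (fun ℓ _ => this ℓ), Finset.prod_const, Finset.card_range]
  have hset : {ω | (∑ ℓ ∈ Finset.range L, X ℓ ω) ≤ q' * L}
      = {ω | (∑ ℓ ∈ Finset.range L, X ℓ) ω ≤ q' * L} := by
    simp [Finset.sum_apply]
  have hm0 : 0 ≤ p * Real.exp (-s) + (1 - p) := by
    have := Real.exp_pos (-s)
    nlinarith [hq0, hq1]
  have hmle : p * Real.exp (-s) + (1 - p) ≤ Real.exp (p * ((1 + s)⁻¹ - 1)) := by
    have h1 : Real.exp (-s) ≤ (1 + s)⁻¹ := by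
      rw [Real.exp_neg]
      exact inv_anti₀ h1s (by linarith [Real.add_one_le_exp s])
    calc p * Real.exp (-s) + (1 - p) = 1 + p * (Real.exp (-s) - 1) := by ring
      _ ≤ 1 + p * ((1 + s)⁻¹ - 1) := by nlinarith
      _ ≤ Real.exp (p * ((1 + s)⁻¹ - 1)) := by
          linarith [Real.add_one_le_exp (p * ((1 + s)⁻¹ - 1))]
  calc (μ {ω | (∑ ℓ ∈ Finset.range L, X ℓ ω) ≤ q' * L}).toReal
      ≤ Real.exp (-(-s) * (q' * L)) * mgf (∑ ℓ ∈ Finset.range L, X ℓ) μ (-s) := by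
        rw [hset]; exact hcher
    _ = Real.exp (s * q' * L) * (p * Real.exp (-s) + (1 - p)) ^ L := by
        rw [hmgf]; ring_nf
    _ ≤ Real.exp (s * q' * L) * Real.exp (p * ((1 + s)⁻¹ - 1)) ^ L := by
        gcongr
    _ = Real.exp (-(c * L)) := by
        rw [← Real.exp_nat_mul, ← Real.exp_add]
        congr 1
        rw [hc_def]
        ring
/-- Asymptotic size of the e-value merged set: for a fixed candidate `y` with
miscoverage probability `P(y ∉ C₁) > α (τ/α')^{1/k}`, the probability that the
merged e-value `ē_k` (built from the first `L` i.i.d. sets) rejects `y`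
is `1 - O(exp(-c L))`. -/
theorem stmt_10 {Ω 𝒴 : Type*} [MeasurableSpace Ω] (μ : Measure Ω) [IsProbabilityMeasure μ]
    (α α' τ : ℝ) (hα : α ∈ Set.Ioo (0 : ℝ) 1) (hα' : α' ∈ Set.Ioo (0 : ℝ) 1)
    (hτ : τ ∈ Set.Ioc (0 : ℝ) 1) (k : ℕ) (hk : 1 ≤ k)
    (Y : Ω → 𝒴) (C : ℕ → Ω → Set 𝒴) (y : 𝒴)
    (hcov : ∀ ℓ : ℕ, μ {ω | Y ω ∉ C ℓ ω} ≤ ENNReal.ofReal α)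
    (hmeas : ∀ ℓ : ℕ, MeasurableSet {ω | y ∉ C ℓ ω})
    (hindep : iIndepSet (fun ℓ : ℕ => {ω | y ∉ C ℓ ω}) μ)
    (hident : ∀ ℓ : ℕ, μ {ω | y ∉ C ℓ ω} = μ {ω | y ∉ C 0 ω})
    (hq : α * (τ / α') ^ ((k : ℝ))⁻¹ < (μ {ω | y ∉ C 0 ω}).toReal) :
    ∃ c > (0 : ℝ), ∃ K : ℝ, ∀ L : ℕ,
      1 - (μ {ω | τ / α' ≤ ((L.choose k : ℝ))⁻¹ *
            ∑ I ∈ Finset.powersetCard k (Finset.range L),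
              ∏ ℓ ∈ I, (α⁻¹ * if y ∉ C ℓ ω then (1 : ℝ) else 0)}).toReal
        ≤ K * Real.exp (-(c * L)) := by
  obtain ⟨hα0, hα1⟩ := hα
  obtain ⟨hα'0, hα'1⟩ := hα'
  obtain ⟨hτ0, hτ1⟩ := hτ
  set A : ℕ → Set Ω := fun ℓ => {ω | y ∉ C ℓ ω} with hA_def
  set p : ℝ := (μ (A 0)).toReal with hp_def
  set q : ℝ := α * (τ / α') ^ ((k : ℝ))⁻¹ with hq_def
  have hτα' : 0 < τ / α' := div_pos hτ0 hα'0
  have hq0 : 0 < q := mul_pos hα0 (Real.rpow_pos_of_pos hτα' _)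
  have hqp : q < p := hq
  have hp1 : p ≤ 1 := by
    rw [hp_def]
    exact ENNReal.toReal_le_of_le_ofReal one_pos.le (by simpa using prob_le_one)
  set q' : ℝ := (p + q) / 2 with hq'_def
  have hq'0 : 0 < q' := by rw [hq'_def]; linarith
  have hq'p : q' < p := by rw [hq'_def]; linarith
  have hqq' : q < q' := by rw [hq'_def]; linarith
  obtain ⟨c, hc, hcher⟩ := aux_chernoff μ A hmeas hindep p
    (fun ℓ => by rw [hp_def, hA_def]; exact congrArg ENNReal.toReal (hident ℓ))
    q' hq'0 hq'p hp1
  refine ⟨c, hc, Real.exp (c * ((k : ℝ) / (q' - q) + 1)), fun L => ?_⟩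
  set E : Set Ω := {ω | τ / α' ≤ ((L.choose k : ℝ))⁻¹ *
      ∑ I ∈ Finset.powersetCard k (Finset.range L),
        ∏ ℓ ∈ I, (α⁻¹ * if y ∉ C ℓ ω then (1 : ℝ) else 0)} with hE_def
  have hE0 : 0 ≤ (μ E).toReal := ENNReal.toReal_nonneg
  have hE1 : (μ E).toReal ≤ 1 :=
    ENNReal.toReal_le_of_le_ofReal one_pos.le (by simpa using prob_le_one)
  by_cases hL : (k : ℝ) ≤ (q' - q) * L
  · -- large L : use Chernoff
    -- success set
    have hTsub : ∀ ω : Ω, ((Finset.range L).filter fun ℓ => y ∉ C ℓ ω) ⊆ Finset.range L :=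
      fun ω => Finset.filter_subset _ _
    -- sum identity
    have hsum : ∀ ω : Ω, (∑ I ∈ Finset.powersetCard k (Finset.range L),
        ∏ ℓ ∈ I, (α⁻¹ * if y ∉ C ℓ ω then (1 : ℝ) else 0))
        = α⁻¹ ^ k * ((((Finset.range L).filter fun ℓ => y ∉ C ℓ ω).card.choose k : ℝ)) := by
      intro ω
      rw [← aux_sum_prod_ind ((Finset.range L).filter fun ℓ => y ∉ C ℓ ω)
        (Finset.range L) (hTsub ω) k, Finset.mul_sum]
      refine Finset.sum_congr rfl fun I hI => ?_
      obtain ⟨hIsub, hIcard⟩ := Finset.mem_powersetCard.mp hI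
      rw [Finset.prod_mul_distrib, Finset.prod_const, hIcard]
      congr 1
      refine Finset.prod_congr rfl fun ℓ hℓ => ?_
      have hmem : ℓ ∈ Finset.range L := hIsub hℓ
      by_cases h : y ∉ C ℓ ω
      · simp [Finset.mem_filter, h, hmem]
      · simp [Finset.mem_filter, h]
    -- indicator sum identity
    have hS : ∀ ω : Ω, (∑ ℓ ∈ Finset.range L, (A ℓ).indicator (fun _ => (1:ℝ)) ω)
        = (((Finset.range L).filter fun ℓ => y ∉ C ℓ ω).card : ℝ) := by
      intro ω
      have h1 : ∀ ℓ, (A ℓ).indicator (fun _ => (1:ℝ)) ω = if y ∉ C ℓ ω then 1 else 0 := by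
        intro ℓ
        simp only [Set.indicator_apply, hA_def, Set.mem_setOf_eq]
      rw [Finset.sum_congr rfl fun ℓ _ => h1 ℓ, Finset.card_filter]
      push_cast
      rfl
    -- complement inclusion
    have hincl : Eᶜ ⊆ {ω | (∑ ℓ ∈ Finset.range L, (A ℓ).indicator (fun _ => (1:ℝ)) ω)
        ≤ q' * L} := by
      intro ω hω
      by_contra hcon
      apply hω
      simp only [Set.mem_setOf_eq, not_le] at hcon
      rw [hS ω] at hcon
      set S : ℕ := ((Finset.range L).filter fun ℓ => y ∉ C ℓ ω).card with hS_def
      -- derive the key inequality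
      have hqLk : q * L + k ≤ q' * L := by nlinarith [hL]
      have hSL : S ≤ L := by
        rw [hS_def]
        exact (Finset.card_filter_le _ _).trans (le_of_eq (Finset.card_range L))
      have hkS : (k : ℝ) < S := by
        have hql : 0 ≤ q * L := mul_nonneg hq0.le (Nat.cast_nonneg L)
        linarith
      have hkS' : k ≤ S := by exact_mod_cast hkS.le
      have hkL : k ≤ L := hkS'.trans hSL
      have hLc0 : 0 < (L.choose k : ℝ) := by
        exact_mod_cast Nat.choose_pos hkL
      have hfac0 : 0 < ((Nat.factorial k) : ℝ) := by exact_mod_cast Nat.factorial_pos k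
      -- descFactorial bounds
      have h1 : ((S + 1 - k : ℕ) : ℝ) ^ k ≤ (S.choose k : ℝ) * (Nat.factorial k) := by
        have := aux_pow_le_descFactorial S k
        rw [Nat.descFactorial_eq_factorial_mul_choose] at this
        calc ((S + 1 - k : ℕ) : ℝ) ^ k = (((S + 1 - k) ^ k : ℕ) : ℝ) := by push_cast; ring
          _ ≤ (((Nat.factorial k) * S.choose k : ℕ) : ℝ) := by exact_mod_cast this
          _ = (S.choose k : ℝ) * (Nat.factorial k) := by push_cast; ring
      have h2 : (L.choose k : ℝ) * (Nat.factorial k) ≤ (L : ℝ) ^ k := by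
        have := Nat.descFactorial_le_pow L k
        rw [Nat.descFactorial_eq_factorial_mul_choose] at this
        calc (L.choose k : ℝ) * (Nat.factorial k) = (((Nat.factorial k) * L.choose k : ℕ) : ℝ) := by push_cast; ring
          _ ≤ ((L ^ k : ℕ) : ℝ) := by exact_mod_cast this
          _ = (L : ℝ) ^ k := by push_cast; ring
      have hcast : ((S + 1 - k : ℕ) : ℝ) = (S : ℝ) + 1 - k := by
        have : k ≤ S + 1 := hkS'.trans (Nat.le_succ S)
        push_cast [Nat.cast_sub this]
        ring
      have h3 : q * L ≤ ((S + 1 - k : ℕ) : ℝ) := by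
        rw [hcast]
        linarith
      have h4 : (q * L) ^ k ≤ ((S + 1 - k : ℕ) : ℝ) ^ k :=
        pow_le_pow_left₀ (mul_nonneg hq0.le (Nat.cast_nonneg L)) h3 k
      have hk0 : (k : ℝ) ≠ 0 := Nat.cast_ne_zero.mpr (by omega)
      have hqk : q ^ k = α ^ k * (τ / α') := by
        rw [hq_def, mul_pow]
        congr 1
        rw [← Real.rpow_natCast ((τ / α') ^ ((k : ℝ))⁻¹) k,
          ← Real.rpow_mul hτα'.le, inv_mul_cancel₀ hk0, Real.rpow_one]
      have h5 : (q * L) ^ k = α ^ k * (τ / α') * (L : ℝ) ^ k := by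
        rw [mul_pow, hqk]
      have hαk : 0 < α ^ k := pow_pos hα0 k
      -- combine
      have hkey : α ^ k * (τ / α') * (L.choose k : ℝ) ≤ (S.choose k : ℝ) := by
        have h6 : α ^ k * (τ / α') * (L.choose k : ℝ) * (Nat.factorial k)
            ≤ (S.choose k : ℝ) * (Nat.factorial k) := by
          calc α ^ k * (τ / α') * (L.choose k : ℝ) * (Nat.factorial k)
              = α ^ k * (τ / α') * ((L.choose k : ℝ) * (Nat.factorial k)) := by ring
            _ ≤ α ^ k * (τ / α') * (L : ℝ) ^ k :=
                mul_le_mul_of_nonneg_left h2 (mul_pos hαk hτα').le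
            _ = (q * L) ^ k := h5.symm
            _ ≤ ((S + 1 - k : ℕ) : ℝ) ^ k := h4
            _ ≤ (S.choose k : ℝ) * (Nat.factorial k) := h1
        exact le_of_mul_le_mul_right h6 hfac0
      -- conclude membership in E
      rw [hE_def]
      simp only [Set.mem_setOf_eq]
      rw [hsum ω, ← hS_def]
      rw [inv_pow]
      have heq : (L.choose k : ℝ)⁻¹ * ((α ^ k)⁻¹ * (α ^ k * (τ / α') * (L.choose k : ℝ)))
          = τ / α' := by
        field_simp
      calc τ / α'
          = (L.choose k : ℝ)⁻¹ * ((α ^ k)⁻¹ * (α ^ k * (τ / α') * (L.choose k : ℝ))) :=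
            heq.symm
        _ ≤ (L.choose k : ℝ)⁻¹ * ((α ^ k)⁻¹ * (S.choose k : ℝ)) := by
            gcongr
    -- measure bound
    have h1le : (1 : ℝ) ≤ (μ E).toReal + (μ Eᶜ).toReal := by
      have huniv : (1 : ENNReal) ≤ μ E + μ Eᶜ := by
        rw [← measure_univ (μ := μ), ← Set.union_compl_self E]
        exact measure_union_le E Eᶜ
      have := ENNReal.toReal_mono (by
        exact ENNReal.add_ne_top.mpr ⟨measure_ne_top μ E, measure_ne_top μ Eᶜ⟩) huniv
      rwa [ENNReal.toReal_one, ENNReal.toReal_add (measure_ne_top μ E) (measure_ne_top μ Eᶜ)]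
        at this
    have hEc : (μ Eᶜ).toReal ≤ Real.exp (-(c * L)) := by
      refine le_trans ?_ (hcher L)
      exact ENNReal.toReal_mono (measure_ne_top μ _) (measure_mono hincl)
    have hK1 : (1 : ℝ) ≤ Real.exp (c * ((k : ℝ) / (q' - q) + 1)) := by
      refine Real.one_le_exp ?_
      have h7 : 0 ≤ (k : ℝ) / (q' - q) := div_nonneg (Nat.cast_nonneg k) (by linarith)
      have h8 := mul_nonneg hc.le (by linarith : (0:ℝ) ≤ (k : ℝ) / (q' - q) + 1)
      linarith
    calc 1 - (μ E).toReal ≤ (μ Eᶜ).toReal := by linarith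
      _ ≤ Real.exp (-(c * L)) := hEc
      _ ≤ Real.exp (c * ((k : ℝ) / (q' - q) + 1)) * Real.exp (-(c * L)) := by
          nlinarith [Real.exp_pos (-(c * L)), hK1]
  · -- small L : trivial bound
    push_neg at hL
    have hLlt : (L : ℝ) < (k : ℝ) / (q' - q) := by
      rw [lt_div_iff₀ (by linarith : (0:ℝ) < q' - q)]
      linarith [hL]
    have : (1 : ℝ) ≤ Real.exp (c * ((k : ℝ) / (q' - q) + 1)) * Real.exp (-(c * L)) := by
      rw [← Real.exp_add]
      refine Real.one_le_exp ?_
      have h8 : 0 < c * ((k : ℝ) / (q' - q) + 1 - L) := mul_pos hc (by linarith)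
      nlinarith [h8]
    linarith
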